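/- Let a > 0 and δ > 0. There exists a constant C(δ) > 0, depending only on a and δ, such that for every ξ ∈ ℝ and every pair of C¹ functions f, g : [1,∞) → ℂ satisfying the system f'(t) = −i ξ² f(t) + i a² t^{−1−2ia²} conj(g(t)) and g'(t) = −i ξ² g(t) + i a² t^{−1−2ia²} conj(f(t)), one has |f(t)| ≤ C(δ) t^{δ} (|f(1)| + |g(1)|) for all t ≥ 1. -/

import Mathlib

set_option maxHeartbeats 1000000

noncomputable section

open Set

/-- Grönwall: if `E' ≤ g·E` on `[s,T]` with `G' = g`, then `E T ≤ E s · exp(G T − G s)`. -/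
lemma gron {E e G g : ℝ → ℝ} {s T : ℝ} (hsT : s ≤ T)
    (hE : ∀ t ∈ Icc s T, HasDerivWithinAt E (e t) (Icc s T) t)
    (hG : ∀ t ∈ Icc s T, HasDerivWithinAt G (g t) (Icc s T) t)
    (hle : ∀ t ∈ Icc s T, e t ≤ g t * E t) :
    E T ≤ E s * Real.exp (G T - G s) := by
  rcases eq_or_lt_of_le hsT with rfl | hlt
  · simp
  set F : ℝ → ℝ := fun t => E t * Real.exp (-(G t)) with hF
  have hcont : ContinuousOn F (Icc s T) := by
    have hEc : ContinuousOn E (Icc s T) := fun t ht => (hE t ht).continuousWithinAt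
    have hGc : ContinuousOn G (Icc s T) := fun t ht => (hG t ht).continuousWithinAt
    exact hEc.mul (Real.continuous_exp.comp_continuousOn hGc.neg)
  have hD : ∀ t ∈ Ioo s T,
      HasDerivAt F (e t * Real.exp (-(G t)) + E t * (Real.exp (-(G t)) * -(g t))) t := by
    intro t ht
    have ht' : t ∈ Icc s T := ⟨ht.1.le, ht.2.le⟩
    have hmem : Icc s T ∈ nhds t := Icc_mem_nhds ht.1 ht.2
    have hEt : HasDerivAt E (e t) t := (hE t ht').hasDerivAt hmem
    have hGt : HasDerivAt G (g t) t := (hG t ht').hasDerivAt hmem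
    exact hEt.mul hGt.neg.exp
  have hant : AntitoneOn F (Icc s T) := by
    apply antitoneOn_of_deriv_nonpos (convex_Icc s T) hcont
    · intro t ht
      rw [interior_Icc] at ht
      exact (hD t ht).differentiableAt.differentiableWithinAt
    · intro t ht
      rw [interior_Icc] at ht
      rw [(hD t ht).deriv]
      have h1 : e t - g t * E t ≤ 0 := sub_nonpos.2 (hle t ⟨ht.1.le, ht.2.le⟩)
      have h2 : (0:ℝ) < Real.exp (-(G t)) := Real.exp_pos _
      nlinarith
  have hFT : F T ≤ F s := hant (left_mem_Icc.2 hsT) (right_mem_Icc.2 hsT) hsT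
  have h2 : (0:ℝ) < Real.exp (G T) := Real.exp_pos _
  have := mul_le_mul_of_nonneg_right hFT h2.le
  simp only [hF] at this
  rw [mul_assoc, ← Real.exp_add, neg_add_cancel, Real.exp_zero, mul_one] at this
  rw [mul_assoc, ← Real.exp_add] at this
  rw [show G T - G s = -G s + G T by ring]
  exact this

lemma poly {X Y B L A : ℝ} (hB : 0 < B) (hB1 : B ≤ 1) (hL : 0 ≤ L) (hA : 0 ≤ A) :
    2*X*(-(L*B) * Y) + B^2 * (2*Y*((L*B - A)*X)) ≤ (L + A*B) * (X^2 + B^2*Y^2) := by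
  nlinarith [mul_nonneg (mul_nonneg hL hB.le) (sq_nonneg (X + B*Y)),
    mul_nonneg (mul_nonneg hL hB.le) (sq_nonneg (X - B*Y)),
    mul_nonneg (mul_nonneg hA hB.le) (sq_nonneg (X + B*Y)),
    mul_nonneg (mul_nonneg hA hB.le) (sq_nonneg (X - B*Y)),
    mul_nonneg hL (sq_nonneg (X + B*Y)), mul_nonneg hL (sq_nonneg (X - B*Y)),
    mul_nonneg (mul_nonneg hL (mul_nonneg hB.le hB.le)) (sq_nonneg X),
    mul_nonneg (mul_nonneg hL (mul_nonneg hB.le hB.le)) (sq_nonneg Y),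
    sq_nonneg (X + B*Y), sq_nonneg (X - B*Y)]

/-- Hyperbolic-region estimate: if `λ T ≤ 2a²` then
`x(T)² + y(T)² ≤ (1+log T)·exp(4a²√(1+log T))·(x(1)²+y(1)²)`. -/
lemma hyper {a lam : ℝ} (ha : 0 < a) (hlam : 0 ≤ lam) {x y : ℝ → ℝ} {T : ℝ} (hT : 1 ≤ T)
    (hx : ∀ t ∈ Icc (1:ℝ) T, HasDerivWithinAt x (-lam * y t) (Icc 1 T) t)
    (hy : ∀ t ∈ Icc (1:ℝ) T, HasDerivWithinAt y ((lam - 2*a^2/t) * x t) (Icc 1 T) t)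
    (hh : lam * T ≤ 2*a^2) :
    x T^2 + y T^2 ≤
      (1 + Real.log T) * Real.exp (4*a^2*Real.sqrt (1 + Real.log T)) * (x 1^2 + y 1^2) := by
  have hlog : 0 ≤ Real.log T := Real.log_nonneg hT
  set u : ℝ := 1 + Real.log T with hu
  have hu1 : 1 ≤ u := by simp only [hu]; linarith
  have hsu : 1 ≤ Real.sqrt u := by
    rw [show (1:ℝ) = Real.sqrt 1 by simp]
    exact Real.sqrt_le_sqrt hu1
  have hsu0 : 0 < Real.sqrt u := by linarith
  set B : ℝ := (Real.sqrt u)⁻¹ with hB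
  have hB0 : 0 < B := by positivity
  have hB1 : B ≤ 1 := by
    rw [hB, inv_le_one_iff₀]; right; exact hsu
  set L : ℝ := lam * Real.sqrt u with hL
  have hL0 : 0 ≤ L := by positivity
  have hLB : L * B = lam := by
    rw [hL, hB]; field_simp
  -- Grönwall with E = x² + B²y², G = L t + 2a²B log t
  set E : ℝ → ℝ := fun t => x t^2 + B^2 * y t^2 with hE
  set G : ℝ → ℝ := fun t => L * t + 2*a^2*B*Real.log t with hG
  have key : E T ≤ E 1 * Real.exp (G T - G 1) := by
    apply gron hT (e := fun t => 2*x t*(-lam * y t) + B^2*(2*y t*((lam - 2*a^2/t) * x t)))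
      (g := fun t => L + (2*a^2/t)*B)
    · intro t ht
      have h1 := ((hx t ht).pow 2)
      have h2 := ((hy t ht).pow 2).const_mul (B^2)
      have := h1.add h2
      refine this.congr_deriv ?_
      push_cast
      ring
    · intro t ht
      have ht0 : t ≠ 0 := by have := ht.1; positivity
      have hlog' : HasDerivWithinAt Real.log t⁻¹ (Icc 1 T) t :=
        (Real.hasDerivAt_log ht0).hasDerivWithinAt
      have := (hasDerivWithinAt_id t (Icc 1 T)).const_mul L |>.add
        ((hlog'.const_mul (2*a^2*B)))
      refine this.congr_deriv ?_
      field_simp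
    · intro t ht
      have ht1 : (1:ℝ) ≤ t := ht.1
      have hA : 0 ≤ 2*a^2/t := by positivity
      have := poly (X := x t) (Y := y t) (A := 2*a^2/t) hB0 hB1 hL0 hA
      rw [hLB] at this
      exact this
  -- bound the exponent
  have hexp : G T - G 1 ≤ 4*a^2*Real.sqrt u := by
    have h1 : L * (T - 1) ≤ 2*a^2 * Real.sqrt u := by
      have : lam * (T-1) ≤ 2*a^2 := by nlinarith
      calc L * (T-1) = lam * (T-1) * Real.sqrt u := by rw [hL]; ring
        _ ≤ 2*a^2 * Real.sqrt u := by
            apply mul_le_mul_of_nonneg_right this hsu0.le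
    have h2 : 2*a^2*B*Real.log T ≤ 2*a^2*Real.sqrt u := by
      have hBlog : B * Real.log T ≤ Real.sqrt u := by
        rw [hB, inv_mul_le_iff₀ hsu0, Real.mul_self_sqrt (by linarith : (0:ℝ) ≤ u)]
        linarith
      nlinarith [sq_nonneg a]
    simp only [hG, Real.log_one, mul_zero, mul_one]
    nlinarith
  have hE0 : E 1 ≤ x 1^2 + y 1^2 := by
    have hB2 : B^2 ≤ 1 := by nlinarith
    simp only [hE]
    nlinarith [hB2, sq_nonneg (y 1)]
  have hEx : x T^2 + y T^2 ≤ u * E T := by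
    have hBu : B^2 * u = 1 := by
      rw [hB]; rw [inv_pow, Real.sq_sqrt (by linarith : (0:ℝ) ≤ u)]
      field_simp
    simp only [hE]
    nlinarith [sq_nonneg (x T), sq_nonneg (y T)]
  have hEpos : (0:ℝ) ≤ x 1^2 + y 1^2 := by positivity
  calc x T^2 + y T^2 ≤ u * E T := hEx
    _ ≤ u * (E 1 * Real.exp (G T - G 1)) := by
        apply mul_le_mul_of_nonneg_left key (by linarith)
    _ ≤ u * ((x 1^2 + y 1^2) * Real.exp (4*a^2*Real.sqrt u)) := by
        apply mul_le_mul_of_nonneg_left _ (by linarith : (0:ℝ) ≤ u)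
        have := Real.exp_le_exp.2 hexp
        nlinarith [Real.exp_pos (G T - G 1), Real.exp_pos (4*a^2*Real.sqrt u)]
    _ = u * Real.exp (4*a^2*Real.sqrt u) * (x 1^2 + y 1^2) := by ring

/-- Middle-region estimate. -/
lemma middle {a lam : ℝ} {x y : ℝ → ℝ} {s T : ℝ} (hs : 1 ≤ s) (hsT : s ≤ T)
    (hx : ∀ t ∈ Icc s T, HasDerivWithinAt x (-lam * y t) (Icc s T) t)
    (hy : ∀ t ∈ Icc s T, HasDerivWithinAt y ((lam - 2*a^2/t) * x t) (Icc s T) t)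
    (hreg : ∀ t ∈ Icc s T, 2*a^2/t ≤ lam) :
    x T^2 + y T^2 ≤ (x s^2 + y s^2) * Real.exp (lam * (T - s)) := by
  have key : (fun t => x t^2 + y t^2) T ≤ (fun t => x t^2 + y t^2) s *
      Real.exp ((fun t => lam * t) T - (fun t => lam * t) s) := by
    apply gron hsT (e := fun t => 2*x t*(-lam * y t) + 2*y t*((lam - 2*a^2/t) * x t))
      (g := fun _ => lam)
    · intro t ht
      have := ((hx t ht).pow 2).add ((hy t ht).pow 2)
      refine this.congr_deriv ?_
      push_cast
      ring
    · intro t ht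
      have := (hasDerivWithinAt_id t (Icc s T)).const_mul lam
      refine this.congr_deriv ?_
      ring
    · intro t ht
      have hA0 : 0 ≤ 2*a^2/t := by
        have : (1:ℝ) ≤ t := le_trans hs ht.1
        positivity
      have hAl := hreg t ht
      nlinarith [mul_nonneg hA0 (sq_nonneg (x t + y t)),
        mul_nonneg (sub_nonneg.2 hAl) (add_nonneg (sq_nonneg (x t)) (sq_nonneg (y t)))]
  simpa [mul_sub] using key

/-- Elliptic-region estimate. -/
lemma elliptic {a lam : ℝ} (ha : 0 < a) (hlam : 0 < lam) {x y : ℝ → ℝ} {s T : ℝ}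
    (hs : 1 ≤ s) (hsT : s ≤ T)
    (hx : ∀ t ∈ Icc s T, HasDerivWithinAt x (-lam * y t) (Icc s T) t)
    (hy : ∀ t ∈ Icc s T, HasDerivWithinAt y ((lam - 2*a^2/t) * x t) (Icc s T) t)
    (hreg : 4*a^2 ≤ lam * s) :
    x T^2 + y T^2 ≤ 2 * Real.exp 1 * (x s^2 + y s^2) := by
  have hs0 : (0:ℝ) < s := by linarith
  have hc : ∀ t ∈ Icc s T, 2*a^2/(lam*t) ≤ 1/2 := by
    intro t ht
    have ht0 : 0 < t := lt_of_lt_of_le hs0 ht.1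
    rw [div_le_div_iff₀ (by positivity) (by norm_num)]
    nlinarith [mul_le_mul_of_nonneg_left ht.1 hlam.le]
  set N : ℝ → ℝ := fun t => (1 - 2*a^2/(lam*t)) * x t^2 + y t^2 with hN
  set G : ℝ → ℝ := fun t => -(4*a^2/lam) * t⁻¹ with hG
  have key : N T ≤ N s * Real.exp (G T - G s) := by
    apply gron hsT (e := fun t => (2*a^2/lam) * t⁻¹^2 * x t^2 +
        ((1 - 2*a^2/(lam*t)) * (2*x t*(-lam * y t)) + (lam - 2*a^2/t) * x t * (2*y t)))
      (g := fun t => (4*a^2/lam) * t⁻¹^2)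
    · intro t ht
      have ht0 : t ≠ 0 := (lt_of_lt_of_le hs0 ht.1).ne'
      have hinv : HasDerivWithinAt (fun t : ℝ => 1 - 2*a^2/(lam*t))
          ((2*a^2/lam) * t⁻¹^2) (Icc s T) t := by
        have h1 : HasDerivWithinAt (fun t : ℝ => t⁻¹) (-(t^2)⁻¹) (Icc s T) t :=
          (hasDerivAt_inv ht0).hasDerivWithinAt
        have h2 := (h1.const_mul (2*a^2/lam)).const_sub 1
        have hfun : (fun t : ℝ => 1 - 2*a^2/(lam*t)) = (fun t : ℝ => 1 - 2*a^2/lam * t⁻¹) := by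
          funext r
          rw [← div_div, div_eq_mul_inv]
        rw [hfun]
        refine h2.congr_deriv ?_
        field_simp
      have := (hinv.mul ((hx t ht).pow 2)).add ((hy t ht).pow 2)
      refine this.congr_deriv ?_
      push_cast [Pi.pow_apply]
      ring
    · intro t ht
      have ht0 : t ≠ 0 := (lt_of_lt_of_le hs0 ht.1).ne'
      have h1 : HasDerivWithinAt (fun t : ℝ => t⁻¹) (-(t^2)⁻¹) (Icc s T) t :=
        (hasDerivAt_inv ht0).hasDerivWithinAt
      have := h1.const_mul (-(4*a^2/lam))
      refine this.congr_deriv ?_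
      field_simp
    · intro t ht
      have ht0 : 0 < t := lt_of_lt_of_le hs0 ht.1
      have hct := hc t ht
      have h1 : (1 - 2*a^2/(lam*t)) * (2*x t*(-lam * y t)) + (lam - 2*a^2/t) * x t * (2*y t)
          = 0 := by
        field_simp
        ring
      rw [h1, add_zero]
      have hx2 : x t^2 ≤ 2 * ((1 - 2*a^2/(lam*t)) * x t^2 + y t^2) := by
        nlinarith [sq_nonneg (x t), sq_nonneg (y t)]
      have hpos : (0:ℝ) ≤ (2*a^2/lam) * t⁻¹^2 := by positivity
      calc (2*a^2/lam) * t⁻¹^2 * x t^2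
          ≤ (2*a^2/lam) * t⁻¹^2 * (2*((1 - 2*a^2/(lam*t)) * x t^2 + y t^2)) :=
            mul_le_mul_of_nonneg_left hx2 hpos
        _ = (4*a^2/lam) * t⁻¹^2 * ((1 - 2*a^2/(lam*t)) * x t^2 + y t^2) := by ring
  have hGle : G T - G s ≤ 1 := by
    have hT0 : (0:ℝ) < T := lt_of_lt_of_le hs0 hsT
    have h1 : G T - G s = 4*a^2/lam * (s⁻¹ - T⁻¹) := by simp only [hG]; ring
    have h2 : s⁻¹ - T⁻¹ ≤ s⁻¹ := by
      have : (0:ℝ) < T⁻¹ := by positivity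
      linarith
    have h3 : 4*a^2/lam * s⁻¹ ≤ 1 := by
      rw [div_mul_eq_mul_div, div_le_one hlam]
      calc 4*a^2 * s⁻¹ ≤ lam * s * s⁻¹ := by
            apply mul_le_mul_of_nonneg_right hreg (by positivity)
        _ = lam := by field_simp
    have h4 : (0:ℝ) ≤ 4*a^2/lam := by positivity
    calc G T - G s = 4*a^2/lam * (s⁻¹ - T⁻¹) := h1
      _ ≤ 4*a^2/lam * s⁻¹ := mul_le_mul_of_nonneg_left h2 h4
      _ ≤ 1 := h3
  -- conclude
  have hcs : 2*a^2/(lam*s) ≤ 1/2 := hc s (left_mem_Icc.2 hsT)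
  have hcT : 2*a^2/(lam*T) ≤ 1/2 := hc T (right_mem_Icc.2 hsT)
  have hcs0 : 0 < 2*a^2/(lam*s) := by positivity
  have hcT0 : 0 < 2*a^2/(lam*T) := by
    have : (0:ℝ) < T := lt_of_lt_of_le hs0 hsT
    positivity
  have hNs : N s ≤ x s^2 + y s^2 := by
    simp only [hN]
    nlinarith [sq_nonneg (x s)]
  have hNs0 : 0 ≤ N s := by
    simp only [hN]
    nlinarith [sq_nonneg (x s), sq_nonneg (y s)]
  have hNT : x T^2 + y T^2 ≤ 2 * N T := by
    simp only [hN]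
    nlinarith [sq_nonneg (x T), sq_nonneg (y T)]
  have hexp : Real.exp (G T - G s) ≤ Real.exp 1 := Real.exp_le_exp.2 hGle
  calc x T^2 + y T^2 ≤ 2 * N T := hNT
    _ ≤ 2 * (N s * Real.exp (G T - G s)) := by linarith [key]
    _ ≤ 2 * (N s * Real.exp 1) := by
        apply mul_le_mul_of_nonneg_left _ (by norm_num)
        exact mul_le_mul_of_nonneg_left hexp hNs0
    _ ≤ 2 * Real.exp 1 * (x s^2 + y s^2) := by
        have := Real.exp_pos 1
        nlinarith

/-- The growth function. -/
noncomputable def Phi (a T : ℝ) : ℝ := (1 + Real.log T) * Real.exp (4*a^2*Real.sqrt (1 + Real.log T))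

lemma Phi_one_le {a s : ℝ} (hs : 1 ≤ s) : 1 ≤ Phi a s := by
  have h1 : 0 ≤ Real.log s := Real.log_nonneg hs
  have h2 : 1 ≤ Real.exp (4*a^2*Real.sqrt (1 + Real.log s)) := by
    rw [show (1:ℝ) = Real.exp 0 by simp]
    apply Real.exp_le_exp.2
    positivity
  unfold Phi
  nlinarith

lemma Phi_mono {a s T : ℝ} (hs : 1 ≤ s) (hsT : s ≤ T) : Phi a s ≤ Phi a T := by
  have h1 : Real.log s ≤ Real.log T := Real.log_le_log (by linarith) hsT
  have h2 : 0 ≤ Real.log s := Real.log_nonneg hs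
  have h3 : Real.sqrt (1 + Real.log s) ≤ Real.sqrt (1 + Real.log T) :=
    Real.sqrt_le_sqrt (by linarith)
  unfold Phi
  have h4 : Real.exp (4*a^2*Real.sqrt (1 + Real.log s)) ≤
      Real.exp (4*a^2*Real.sqrt (1 + Real.log T)) := by
    apply Real.exp_le_exp.2
    nlinarith [sq_nonneg a, Real.sqrt_nonneg (1 + Real.log s)]
  have h5 : (0:ℝ) < Real.exp (4*a^2*Real.sqrt (1 + Real.log s)) := Real.exp_pos _
  nlinarith

/-- Core real 2-d estimate, valid for all `T ≥ 1`, uniformly in `lam ≥ 0`. -/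
lemma core {a lam : ℝ} (ha : 0 < a) (hlam : 0 ≤ lam) {x y : ℝ → ℝ}
    (hx : ∀ t ∈ Ici (1:ℝ), HasDerivWithinAt x (-lam * y t) (Ici 1) t)
    (hy : ∀ t ∈ Ici (1:ℝ), HasDerivWithinAt y ((lam - 2*a^2/t) * x t) (Ici 1) t)
    {T : ℝ} (hT : 1 ≤ T) :
    x T^2 + y T^2 ≤ 2 * Real.exp (1 + 2*a^2) * Phi a T * (x 1^2 + y 1^2) := by
  set K2 : ℝ := 2 * Real.exp (1 + 2*a^2) with hK2
  have hK21 : 1 ≤ K2 := by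
    have := Real.one_le_exp (by positivity : (0:ℝ) ≤ 1 + 2*a^2)
    simp only [hK2]; linarith
  have hE1 : (0:ℝ) ≤ x 1^2 + y 1^2 := by positivity
  have hPhiT : 1 ≤ Phi a T := Phi_one_le (a := a) hT
  -- restriction helper
  have hxI : ∀ s' T' : ℝ, 1 ≤ s' → ∀ t ∈ Icc s' T', HasDerivWithinAt x (-lam * y t) (Icc s' T') t := by
    intro s' T' hs' t ht
    exact (hx t (le_trans hs' ht.1)).mono (fun r hr => le_trans hs' hr.1)
  have hyI : ∀ s' T' : ℝ, 1 ≤ s' → ∀ t ∈ Icc s' T',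
      HasDerivWithinAt y ((lam - 2*a^2/t) * x t) (Icc s' T') t := by
    intro s' T' hs' t ht
    exact (hy t (le_trans hs' ht.1)).mono (fun r hr => le_trans hs' hr.1)
  by_cases hcase1 : lam * T ≤ 2*a^2
  · -- pure hyperbolic
    have := hyper ha hlam hT (hxI 1 T le_rfl) (hyI 1 T le_rfl) hcase1
    calc x T^2 + y T^2 ≤ Phi a T * (x 1^2 + y 1^2) := this
      _ ≤ K2 * Phi a T * (x 1^2 + y 1^2) := by
          nlinarith [mul_nonneg (mul_nonneg (by linarith : (0:ℝ) ≤ K2 - 1)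
            (by linarith : (0:ℝ) ≤ Phi a T)) hE1]
  · push_neg at hcase1
    have hlam0 : 0 < lam := by
      rcases lt_or_eq_of_le hlam with h | h
      · exact h
      · exfalso; rw [← h] at hcase1; nlinarith
    obtain ⟨s1, hs1⟩ : ∃ s1 : ℝ, s1 = max 1 (2*a^2/lam) := ⟨_, rfl⟩
    have hs11 : 1 ≤ s1 := by rw [hs1]; exact le_max_left _ _
    have hs1T : s1 ≤ T := by
      rw [hs1]
      apply max_le hT
      rw [div_le_iff₀ hlam0]
      linarith [hcase1]
    have hls1 : 2*a^2 ≤ lam * s1 := by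
      have : 2*a^2/lam ≤ s1 := by rw [hs1]; exact le_max_right _ _
      rw [div_le_iff₀ hlam0] at this
      linarith
    -- step 1 : E0 s1 ≤ Phi a s1 * E0 1
    have step1 : x s1^2 + y s1^2 ≤ Phi a s1 * (x 1^2 + y 1^2) := by
      by_cases ht1 : 2*a^2/lam ≤ 1
      · have : s1 = 1 := by rw [hs1]; exact max_eq_left ht1
        rw [this]
        nlinarith [Phi_one_le (a := a) (le_refl (1:ℝ))]
      · push_neg at ht1
        have hseq : s1 = 2*a^2/lam := by rw [hs1]; exact max_eq_right ht1.le
        have hhyp : lam * s1 ≤ 2*a^2 := by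
          rw [hseq]
          rw [mul_div_cancel₀ _ hlam0.ne']
        exact hyper ha hlam hs11 (hxI 1 s1 le_rfl) (hyI 1 s1 le_rfl) hhyp
    have hPhis1 : Phi a s1 ≤ Phi a T := Phi_mono hs11 hs1T
    by_cases hcase2 : lam * T ≤ 4*a^2
    · -- middle to T
      have hregm : ∀ t ∈ Icc s1 T, 2*a^2/t ≤ lam := by
        intro t ht
        have ht0 : (0:ℝ) < t := lt_of_lt_of_le (by norm_num) (le_trans hs11 ht.1)
        rw [div_le_iff₀ ht0]
        calc 2*a^2 ≤ lam * s1 := hls1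
          _ ≤ lam * t := mul_le_mul_of_nonneg_left ht.1 hlam
      have hmid := middle hs11 hs1T (hxI s1 T hs11) (hyI s1 T hs11) hregm
      have hexp : lam * (T - s1) ≤ 2*a^2 := by nlinarith
      have hexp' : Real.exp (lam * (T - s1)) ≤ Real.exp (1 + 2*a^2) := by
        apply Real.exp_le_exp.2; linarith
      have hEs1 : (0:ℝ) ≤ x s1^2 + y s1^2 := by positivity
      calc x T^2 + y T^2 ≤ (x s1^2 + y s1^2) * Real.exp (lam * (T - s1)) := hmid
        _ ≤ (Phi a s1 * (x 1^2 + y 1^2)) * Real.exp (1 + 2*a^2) := by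
            apply mul_le_mul step1 hexp' (Real.exp_pos _).le
            exact mul_nonneg (by linarith [Phi_one_le (a := a) hs11]) hE1
        _ ≤ K2 * Phi a T * (x 1^2 + y 1^2) := by
            have he : (0:ℝ) < Real.exp (1 + 2*a^2) := Real.exp_pos _
            have hp1 : (0:ℝ) ≤ Phi a s1 := by nlinarith [Phi_one_le (a := a) hs11]
            nlinarith [mul_le_mul_of_nonneg_right hPhis1 hE1]
    · push_neg at hcase2
      obtain ⟨s2, hs2⟩ : ∃ s2 : ℝ, s2 = max 1 (4*a^2/lam) := ⟨_, rfl⟩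
      have hs21 : 1 ≤ s2 := by rw [hs2]; exact le_max_left _ _
      have h24 : 2*a^2/lam ≤ 4*a^2/lam := by
        gcongr
        nlinarith [sq_nonneg a]
      have hs12 : s1 ≤ s2 := by rw [hs1, hs2]; exact max_le_max le_rfl h24
      have hs2T : s2 ≤ T := by
        rw [hs2]
        apply max_le hT
        rw [div_le_iff₀ hlam0]
        linarith
      have hls2 : 4*a^2 ≤ lam * s2 := by
        have : 4*a^2/lam ≤ s2 := by rw [hs2]; exact le_max_right _ _
        rw [div_le_iff₀ hlam0] at this
        linarith
      have hgap : lam * (s2 - s1) ≤ 2*a^2 := by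
        by_cases h41 : 4*a^2/lam ≤ 1
        · have hs2e : s2 = 1 := by rw [hs2]; exact max_eq_left h41
          have hs1e : s1 = 1 := by rw [hs1]; exact max_eq_left (le_trans h24 h41)
          rw [hs2e, hs1e]
          norm_num
          positivity
        · push_neg at h41
          have hs2e : lam * s2 = 4*a^2 := by
            rw [show s2 = 4*a^2/lam by rw [hs2]; exact max_eq_right h41.le,
              mul_div_cancel₀ _ hlam0.ne']
          have hr : lam*(s2-s1) = lam*s2 - lam*s1 := by ring
          rw [hr, hs2e]
          linarith [hls1]
      have hregm2 : ∀ t ∈ Icc s1 s2, 2*a^2/t ≤ lam := by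
        intro t ht
        have ht0 : (0:ℝ) < t := lt_of_lt_of_le (by norm_num) (le_trans hs11 ht.1)
        rw [div_le_iff₀ ht0]
        calc 2*a^2 ≤ lam * s1 := hls1
          _ ≤ lam * t := mul_le_mul_of_nonneg_left ht.1 hlam
      have hmid := middle hs11 hs12 (hxI s1 s2 hs11) (hyI s1 s2 hs11) hregm2
      have hell := elliptic ha hlam0 hs21 hs2T (hxI s2 T hs21) (hyI s2 T hs21) hls2
      have hexp' : Real.exp (lam * (s2 - s1)) ≤ Real.exp (2*a^2) :=
        Real.exp_le_exp.2 hgap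
      have hEs1 : (0:ℝ) ≤ x s1^2 + y s1^2 := by positivity
      have hPhis10 : (0:ℝ) ≤ Phi a s1 := by linarith [Phi_one_le (a := a) hs11]
      have hKsplit : K2 = 2 * Real.exp 1 * Real.exp (2*a^2) := by
        rw [hK2, mul_assoc, ← Real.exp_add]
      calc x T^2 + y T^2 ≤ 2 * Real.exp 1 * (x s2^2 + y s2^2) := hell
        _ ≤ 2 * Real.exp 1 * ((x s1^2 + y s1^2) * Real.exp (2*a^2)) := by
            apply mul_le_mul_of_nonneg_left _ (by positivity)
            calc x s2^2 + y s2^2 ≤ (x s1^2 + y s1^2) * Real.exp (lam * (s2 - s1)) := hmid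
              _ ≤ (x s1^2 + y s1^2) * Real.exp (2*a^2) :=
                  mul_le_mul_of_nonneg_left hexp' hEs1
        _ ≤ 2 * Real.exp 1 * ((Phi a s1 * (x 1^2 + y 1^2)) * Real.exp (2*a^2)) := by
            apply mul_le_mul_of_nonneg_left _ (by positivity)
            exact mul_le_mul_of_nonneg_right step1 (Real.exp_pos _).le
        _ = K2 * Phi a s1 * (x 1^2 + y 1^2) := by rw [hKsplit]; ring
        _ ≤ K2 * Phi a T * (x 1^2 + y 1^2) := by
            apply mul_le_mul_of_nonneg_right _ hE1
            apply mul_le_mul_of_nonneg_left hPhis1 (by linarith)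

open Complex in
/-- Scalar complex reduction. -/
lemma scalar {a lam sg : ℝ} (ha : 0 < a) (hlam : 0 ≤ lam) (hsg : sg = 1 ∨ sg = -1)
    {p : ℝ → ℂ}
    (hp : ∀ t ∈ Ici (1:ℝ), HasDerivWithinAt p
      (-(Complex.I * (lam:ℂ)) * p t
        + (sg:ℂ) * Complex.I * (a:ℂ)^2 * (t:ℂ) ^ ((-1:ℂ) - 2*Complex.I*(a:ℂ)^2)
          * (starRingEnd ℂ) (p t)) (Ici 1) t)
    {T : ℝ} (hT : 1 ≤ T) :
    ‖p T‖^2 ≤ 2 * Real.exp (1 + 2*a^2) * Phi a T * ‖p 1‖^2 := by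
  set V : ℝ → ℂ := fun t =>
    Complex.exp (-(Complex.I * (a:ℂ)^2) * (Real.log t : ℂ)) * (starRingEnd ℂ) (p t) with hVdef
  -- derivative of V
  have hV : ∀ t ∈ Ici (1:ℝ), HasDerivWithinAt V
      (Complex.I*((lam:ℂ) - (a:ℂ)^2/(t:ℂ)) * V t
        - (sg:ℂ)*Complex.I*((a:ℂ)^2/(t:ℂ)) * (starRingEnd ℂ) (V t)) (Ici 1) t := by
    intro t ht
    have ht1 : (1:ℝ) ≤ t := ht
    have ht0 : (0:ℝ) < t := by linarith
    have htc : (t:ℂ) ≠ 0 := by exact_mod_cast ht0.ne'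
    set L : ℂ := (Real.log t : ℂ) with hL
    have hexpL : Complex.exp L = (t:ℂ) := by
      rw [hL, Complex.ofReal_log ht0.le, Complex.exp_log htc]
    set w : ℂ := Complex.exp (Complex.I * (a:ℂ)^2 * L) with hw
    have hw0 : w ≠ 0 := Complex.exp_ne_zero _
    have hlogd : HasDerivWithinAt (fun r : ℝ => ((Real.log r : ℝ) : ℂ))
        (((t⁻¹ : ℝ) : ℂ)) (Ici 1) t :=
      ((Real.hasDerivAt_log ht0.ne').ofReal_comp).hasDerivWithinAt
    have hA : HasDerivWithinAt (fun r : ℝ => Complex.exp (-(Complex.I * (a:ℂ)^2) * (Real.log r : ℂ)))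
        (Complex.exp (-(Complex.I * (a:ℂ)^2) * L) * (-(Complex.I * (a:ℂ)^2) * ((t⁻¹ : ℝ) : ℂ)))
        (Ici 1) t := by
      exact (hlogd.const_mul (-(Complex.I * (a:ℂ)^2))).cexp
    have hconj : HasDerivWithinAt (fun r => (starRingEnd ℂ) (p r))
        ((starRingEnd ℂ) (-(Complex.I * (lam:ℂ)) * p t
          + (sg:ℂ) * Complex.I * (a:ℂ)^2 * (t:ℂ) ^ ((-1:ℂ) - 2*Complex.I*(a:ℂ)^2)
            * (starRingEnd ℂ) (p t))) (Ici 1) t := by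
      simpa only [starRingEnd_apply] using (hp t ht).star
    have hV0 := hA.mul hconj
    -- now rewrite the derivative value
    have e1 : Complex.exp (-(Complex.I * (a:ℂ)^2) * L) = w⁻¹ := by
      rw [hw, ← Complex.exp_neg]
      congr 1
      ring
    have ecpow : (t:ℂ) ^ ((-1:ℂ) - 2*Complex.I*(a:ℂ)^2)
        = (t:ℂ)⁻¹ * w⁻¹ * w⁻¹ := by
      rw [Complex.cpow_def_of_ne_zero htc, ← Complex.ofReal_log ht0.le, ← hL]
      have : L * ((-1:ℂ) - 2*Complex.I*(a:ℂ)^2)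
          = (-L) + (-(Complex.I * (a:ℂ)^2 * L)) + (-(Complex.I * (a:ℂ)^2 * L)) := by ring
      rw [this, Complex.exp_add, Complex.exp_add, Complex.exp_neg, Complex.exp_neg, hexpL,
        ← hw]
    have econj : (starRingEnd ℂ) ((t:ℂ) ^ ((-1:ℂ) - 2*Complex.I*(a:ℂ)^2))
        = (t:ℂ)⁻¹ * w * w := by
      rw [Complex.cpow_def_of_ne_zero htc, ← Complex.ofReal_log ht0.le, ← hL,
        ← Complex.exp_conj]
      have : (starRingEnd ℂ) (L * ((-1:ℂ) - 2*Complex.I*(a:ℂ)^2))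
          = (-L) + (Complex.I * (a:ℂ)^2 * L) + (Complex.I * (a:ℂ)^2 * L) := by
        simp only [map_mul, map_sub, map_neg, map_one, map_ofNat, Complex.conj_I, hL,
          Complex.conj_ofReal, map_pow]
        ring
      rw [this, Complex.exp_add, Complex.exp_add, Complex.exp_neg, hexpL, ← hw]
    have hVt : V t = w⁻¹ * (starRingEnd ℂ) (p t) := by
      rw [hVdef]; simp only []; rw [e1]
    have hVconj : (starRingEnd ℂ) (V t) = w * p t := by
      rw [hVdef]
      simp only [map_mul, Complex.conj_conj]
      congr 1
      rw [← Complex.exp_conj]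
      simp only [map_mul, map_neg, Complex.conj_I, hL, Complex.conj_ofReal, map_pow]
      rw [hw]
      ring_nf
      rfl
    have heq : Complex.exp (-(Complex.I * (a:ℂ)^2) * L) * (-(Complex.I * (a:ℂ)^2) * ((t⁻¹ : ℝ) : ℂ))
          * (starRingEnd ℂ) (p t)
        + Complex.exp (-(Complex.I * (a:ℂ)^2) * L)
          * ((starRingEnd ℂ) (-(Complex.I * (lam:ℂ)) * p t
            + (sg:ℂ) * Complex.I * (a:ℂ)^2 * (t:ℂ) ^ ((-1:ℂ) - 2*Complex.I*(a:ℂ)^2)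
              * (starRingEnd ℂ) (p t)))
        = Complex.I*((lam:ℂ) - (a:ℂ)^2/(t:ℂ)) * V t
          - (sg:ℂ)*Complex.I*((a:ℂ)^2/(t:ℂ)) * (starRingEnd ℂ) (V t) := by
      rw [e1, hVconj, hVt]
      simp only [map_add, map_mul, map_neg, Complex.conj_conj, Complex.conj_I,
        Complex.conj_ofReal, map_pow, econj, Complex.ofReal_inv]
      field_simp
      ring
    rw [hVdef]
    simp only []
    rw [← heq]
    exact hV0
  -- norm equality
  have habs : ∀ t : ℝ, 0 < t → ‖V t‖ = ‖p t‖ := by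
    intro t ht0
    rw [hVdef]
    simp only [norm_mul, Complex.norm_exp, Complex.norm_conj]
    have : (-(Complex.I * (a:ℂ)^2) * ((Real.log t : ℝ):ℂ)).re = 0 := by
      simp [Complex.mul_re, ← Complex.ofReal_pow]
    rw [this, Real.exp_zero, one_mul]
  have hsq : ∀ t : ℝ, 0 < t → (V t).re^2 + (V t).im^2 = ‖p t‖^2 := by
    intro t ht0
    have h1 : (V t).re^2 + (V t).im^2 = ‖V t‖^2 := by
      rw [Complex.sq_norm, Complex.normSq_apply]; ring
    rw [h1, habs t ht0]
  have h10 : (0:ℝ) < 1 := one_pos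
  have hT0 : (0:ℝ) < T := by linarith
  -- case analysis on sg
  rcases hsg with rfl | rfl
  · -- sg = 1 : x = Re V, y = Im V
    have hx : ∀ t ∈ Ici (1:ℝ), HasDerivWithinAt (fun r => (V r).re)
        (-lam * (V t).im) (Ici 1) t := by
      intro t ht
      have ht0 : (0:ℝ) < t := lt_of_lt_of_le one_pos ht
      have h := (Complex.reCLM.hasFDerivAt).comp_hasDerivWithinAt t (hV t ht)
      refine h.congr_deriv ?_
      simp only [Complex.reCLM_apply, Complex.sub_re, Complex.mul_re, Complex.mul_im,
        Complex.I_re, Complex.I_im, Complex.sub_im, Complex.ofReal_re, Complex.ofReal_im,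
        Complex.conj_re, Complex.conj_im, Complex.div_re, Complex.div_im,
        ← Complex.ofReal_pow, Complex.normSq_apply, Complex.one_re, Complex.one_im,
        Complex.ofReal_one]
      have htne : t ≠ 0 := ht0.ne'
      field_simp
      ring
    have hy : ∀ t ∈ Ici (1:ℝ), HasDerivWithinAt (fun r => (V r).im)
        ((lam - 2*a^2/t) * (V t).re) (Ici 1) t := by
      intro t ht
      have ht0 : (0:ℝ) < t := lt_of_lt_of_le one_pos ht
      have h := (Complex.imCLM.hasFDerivAt).comp_hasDerivWithinAt t (hV t ht)
      refine h.congr_deriv ?_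
      simp only [Complex.imCLM_apply, Complex.sub_re, Complex.mul_re, Complex.mul_im,
        Complex.I_re, Complex.I_im, Complex.sub_im, Complex.ofReal_re, Complex.ofReal_im,
        Complex.conj_re, Complex.conj_im, Complex.div_re, Complex.div_im,
        ← Complex.ofReal_pow, Complex.normSq_apply, Complex.one_re, Complex.one_im,
        Complex.ofReal_one]
      have htne : t ≠ 0 := ht0.ne'
      field_simp
      ring
    have := core ha hlam hx hy hT
    rw [hsq T hT0, hsq 1 h10] at this
    exact this
  · -- sg = -1 : x = Im V, y = - Re V
    have hx : ∀ t ∈ Ici (1:ℝ), HasDerivWithinAt (fun r => (V r).im)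
        (-lam * (-(V t).re)) (Ici 1) t := by
      intro t ht
      have ht0 : (0:ℝ) < t := lt_of_lt_of_le one_pos ht
      have h := (Complex.imCLM.hasFDerivAt).comp_hasDerivWithinAt t (hV t ht)
      refine h.congr_deriv ?_
      simp only [Complex.imCLM_apply, Complex.sub_re, Complex.mul_re, Complex.mul_im,
        Complex.I_re, Complex.I_im, Complex.sub_im, Complex.ofReal_re, Complex.ofReal_im,
        Complex.conj_re, Complex.conj_im, Complex.div_re, Complex.div_im,
        ← Complex.ofReal_pow, Complex.normSq_apply, Complex.ofReal_neg, Complex.neg_re,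
        Complex.neg_im, Complex.one_re, Complex.one_im, Complex.ofReal_one]
      have htne : t ≠ 0 := ht0.ne'
      field_simp
      ring
    have hy : ∀ t ∈ Ici (1:ℝ), HasDerivWithinAt (fun r => -(V r).re)
        ((lam - 2*a^2/t) * (V t).im) (Ici 1) t := by
      intro t ht
      have ht0 : (0:ℝ) < t := lt_of_lt_of_le one_pos ht
      have h := ((Complex.reCLM.hasFDerivAt).comp_hasDerivWithinAt t (hV t ht)).neg
      refine h.congr_deriv ?_
      simp only [Complex.reCLM_apply, Complex.sub_re, Complex.mul_re, Complex.mul_im,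
        Complex.I_re, Complex.I_im, Complex.sub_im, Complex.ofReal_re, Complex.ofReal_im,
        Complex.conj_re, Complex.conj_im, Complex.div_re, Complex.div_im,
        ← Complex.ofReal_pow, Complex.normSq_apply, Complex.ofReal_neg, Complex.neg_re,
        Complex.neg_im, Complex.one_re, Complex.one_im, Complex.ofReal_one]
      have htne : t ≠ 0 := ht0.ne'
      field_simp
      ring
    have := core ha hlam hx hy hT
    have hrw : ∀ t : ℝ, 0 < t → (V t).im^2 + (-(V t).re)^2 = ‖p t‖^2 := by
      intro t ht0
      rw [← hsq t ht0]
      ring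
    rw [hrw T hT0, hrw 1 h10] at this
    exact this

/-- **A-priori growth bound on the Fourier modes of the linear equation.** For `a, δ > 0`
there is `C(δ) > 0` such that for every frequency `ξ` and every `C¹` pair `(f,g)` on `[1,∞)`
solving `f' = −iξ²f + ia² t^{−1−2ia²} conj(g)`, `g' = −iξ²g + ia² t^{−1−2ia²} conj(f)`,
one has `|f(t)| ≤ C(δ) t^δ (|f(1)| + |g(1)|)` for all `t ≥ 1`. -/
theorem stmt_5
    (a δ : ℝ) (ha : 0 < a) (hδ : 0 < δ) :
    ∃ C : ℝ, 0 < C ∧ ∀ (ξ : ℝ) (f g : ℝ → ℂ),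
      (∀ t ∈ Set.Ici (1:ℝ), HasDerivWithinAt f
        (-(Complex.I * (ξ:ℂ)^2) * f t
          + Complex.I * (a:ℂ)^2 * (t:ℂ) ^ ((-1:ℂ) - 2*Complex.I*(a:ℂ)^2)
              * (starRingEnd ℂ) (g t)) (Set.Ici 1) t) →
      (∀ t ∈ Set.Ici (1:ℝ), HasDerivWithinAt g
        (-(Complex.I * (ξ:ℂ)^2) * g t
          + Complex.I * (a:ℂ)^2 * (t:ℂ) ^ ((-1:ℂ) - 2*Complex.I*(a:ℂ)^2)
              * (starRingEnd ℂ) (f t)) (Set.Ici 1) t) →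
      ∀ t : ℝ, 1 ≤ t → ‖f t‖ ≤ C * t ^ δ * (‖f 1‖ + ‖g 1‖) := by
  
  set c : ℝ := 2*a^2 + 1 with hc
  have hc0 : 0 < c := by positivity
  refine ⟨Real.sqrt (2*Real.exp (1+2*a^2)) * Real.exp (c + c^2/(4*δ)), by positivity, ?_⟩
  intro ξ f g hf hg t ht
  have ht0 : (0:ℝ) < t := by linarith
  have hlam : 0 ≤ ξ^2 := sq_nonneg ξ
  -- the two scalar solutions
  have hp : ∀ r ∈ Ici (1:ℝ), HasDerivWithinAt (fun r => f r + g r)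
      (-(Complex.I * ((ξ^2:ℝ):ℂ)) * (f r + g r)
        + ((1:ℝ):ℂ) * Complex.I * (a:ℂ)^2 * (r:ℂ) ^ ((-1:ℂ) - 2*Complex.I*(a:ℂ)^2)
          * (starRingEnd ℂ) (f r + g r)) (Ici 1) r := by
    intro r hr
    have := (hf r hr).add (hg r hr)
    refine this.congr_deriv ?_
    simp only [map_add]
    push_cast
    ring
  have hq : ∀ r ∈ Ici (1:ℝ), HasDerivWithinAt (fun r => f r - g r)
      (-(Complex.I * ((ξ^2:ℝ):ℂ)) * (f r - g r)
        + ((-1:ℝ):ℂ) * Complex.I * (a:ℂ)^2 * (r:ℂ) ^ ((-1:ℂ) - 2*Complex.I*(a:ℂ)^2)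
          * (starRingEnd ℂ) (f r - g r)) (Ici 1) r := by
    intro r hr
    have := (hf r hr).sub (hg r hr)
    refine this.congr_deriv ?_
    simp only [map_sub]
    push_cast
    ring
  have hP := scalar ha hlam (Or.inl rfl) hp ht
  have hQ := scalar ha hlam (Or.inr rfl) hq ht
  -- pass to norms
  set K : ℝ := 2 * Real.exp (1 + 2*a^2) * Phi a t with hK
  have hK0 : 0 ≤ K := by
    have h1 : (0:ℝ) < Phi a t := lt_of_lt_of_le one_pos (Phi_one_le (a := a) ht)
    positivity
  have hPn : ‖f t + g t‖ ≤ Real.sqrt K * ‖f 1 + g 1‖ := by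
    have h1 : ‖f t + g t‖ = Real.sqrt (‖f t + g t‖^2) := by
      rw [Real.sqrt_sq (norm_nonneg _)]
    rw [h1]
    calc Real.sqrt (‖f t + g t‖^2) ≤ Real.sqrt (K * ‖f 1 + g 1‖^2) := Real.sqrt_le_sqrt hP
      _ = Real.sqrt K * ‖f 1 + g 1‖ := by
          rw [Real.sqrt_mul hK0, Real.sqrt_sq (norm_nonneg _)]
  have hQn : ‖f t - g t‖ ≤ Real.sqrt K * ‖f 1 - g 1‖ := by
    have h1 : ‖f t - g t‖ = Real.sqrt (‖f t - g t‖^2) := by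
      rw [Real.sqrt_sq (norm_nonneg _)]
    rw [h1]
    calc Real.sqrt (‖f t - g t‖^2) ≤ Real.sqrt (K * ‖f 1 - g 1‖^2) := Real.sqrt_le_sqrt hQ
      _ = Real.sqrt K * ‖f 1 - g 1‖ := by
          rw [Real.sqrt_mul hK0, Real.sqrt_sq (norm_nonneg _)]
  have hsumK : ‖f t‖ ≤ Real.sqrt K * (‖f 1‖ + ‖g 1‖) := by
    have h2 : (2:ℝ) * ‖f t‖ = ‖(f t + g t) + (f t - g t)‖ := by
      rw [show (f t + g t) + (f t - g t) = (2:ℂ) * f t by ring, norm_mul]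
      norm_num
    have h3 : ‖(f t + g t) + (f t - g t)‖ ≤ ‖f t + g t‖ + ‖f t - g t‖ := norm_add_le _ _
    have h4 : ‖f 1 + g 1‖ ≤ ‖f 1‖ + ‖g 1‖ := norm_add_le _ _
    have h5 : ‖f 1 - g 1‖ ≤ ‖f 1‖ + ‖g 1‖ := norm_sub_le _ _
    have h6 : (0:ℝ) ≤ Real.sqrt K := Real.sqrt_nonneg _
    nlinarith [mul_le_mul_of_nonneg_left h4 h6, mul_le_mul_of_nonneg_left h5 h6]
  -- bound √K by C t^δ
  set u : ℝ := Real.log t with hu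
  have hu0 : 0 ≤ u := Real.log_nonneg ht
  have hsqrtK : Real.sqrt K ≤
      Real.sqrt (2*Real.exp (1+2*a^2)) * Real.exp (c + c^2/(4*δ)) * t ^ δ := by
    have hS0 : 0 ≤ Real.sqrt (1+u) := Real.sqrt_nonneg _
    have hsp : Real.sqrt (1+u) ≤ 1 + Real.sqrt u := by
      have h1 : 1 + u ≤ (1 + Real.sqrt u)^2 := by
        nlinarith [Real.sq_sqrt hu0, Real.sqrt_nonneg u]
      calc Real.sqrt (1+u) ≤ Real.sqrt ((1 + Real.sqrt u)^2) := Real.sqrt_le_sqrt h1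
        _ = 1 + Real.sqrt u := Real.sqrt_sq (by positivity)
    have hse : Real.sqrt (1+u) ≤ Real.exp (Real.sqrt (1+u)) := by
      have := Real.add_one_le_exp (Real.sqrt (1+u))
      linarith
    have hPhile : Phi a t ≤ Real.exp (2*c*Real.sqrt (1+u)) := by
      unfold Phi
      rw [← hu]
      have h1 : Real.sqrt (1+u) * Real.sqrt (1+u) = 1 + u :=
        Real.mul_self_sqrt (by linarith)
      have h2 : Real.sqrt (1+u) * Real.sqrt (1+u) ≤
          Real.exp (Real.sqrt (1+u)) * Real.exp (Real.sqrt (1+u)) :=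
        mul_le_mul hse hse hS0 (Real.exp_pos _).le
      have h3 : Real.exp (Real.sqrt (1+u)) * Real.exp (Real.sqrt (1+u)) *
          Real.exp (4*a^2*Real.sqrt (1+u)) = Real.exp (2*c*Real.sqrt (1+u)) := by
        rw [← Real.exp_add, ← Real.exp_add, hc]
        congr 1
        ring
      calc (1+u) * Real.exp (4*a^2*Real.sqrt (1+u))
          ≤ (Real.exp (Real.sqrt (1+u)) * Real.exp (Real.sqrt (1+u))) *
            Real.exp (4*a^2*Real.sqrt (1+u)) := by
            apply mul_le_mul_of_nonneg_right _ (Real.exp_pos _).le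
            linarith [h1, h2]
        _ = Real.exp (2*c*Real.sqrt (1+u)) := h3
    have hsqrtPhi : Real.sqrt (Phi a t) ≤ Real.exp (c*Real.sqrt (1+u)) := by
      have h4 : Real.exp (2*c*Real.sqrt (1+u)) = Real.exp (c*Real.sqrt (1+u)) *
          Real.exp (c*Real.sqrt (1+u)) := by
        rw [← Real.exp_add]
        congr 1
        ring
      calc Real.sqrt (Phi a t) ≤ Real.sqrt (Real.exp (2*c*Real.sqrt (1+u))) :=
            Real.sqrt_le_sqrt hPhile
        _ = Real.exp (c*Real.sqrt (1+u)) := by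
            rw [h4, Real.sqrt_mul_self (Real.exp_pos _).le]
    have hcu : c*Real.sqrt (1+u) ≤ c + (c^2/(4*δ) + δ*u) := by
      have h5 : c*Real.sqrt (1+u) ≤ c*(1 + Real.sqrt u) :=
        mul_le_mul_of_nonneg_left hsp hc0.le
      have h6 : c*Real.sqrt u ≤ c^2/(4*δ) + δ*u := by
        have key : 4*δ*(c*Real.sqrt u) ≤ c^2 + 4*δ^2*u := by
          nlinarith [sq_nonneg (c - 2*δ*Real.sqrt u), Real.sq_sqrt hu0]
        rw [← sub_nonneg]
        have h7 : c^2/(4*δ) + δ*u - c*Real.sqrt u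
            = (c^2 + 4*δ^2*u - 4*δ*(c*Real.sqrt u))/(4*δ) := by
          field_simp
        rw [h7]
        apply div_nonneg _ (by linarith)
        linarith
      nlinarith [h5, h6]
    calc Real.sqrt K = Real.sqrt (2*Real.exp (1+2*a^2)) * Real.sqrt (Phi a t) := by
          rw [hK, Real.sqrt_mul (by positivity)]
      _ ≤ Real.sqrt (2*Real.exp (1+2*a^2)) * Real.exp (c*Real.sqrt (1+u)) :=
          mul_le_mul_of_nonneg_left hsqrtPhi (Real.sqrt_nonneg _)
      _ ≤ Real.sqrt (2*Real.exp (1+2*a^2)) * Real.exp (c + (c^2/(4*δ) + δ*u)) :=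
          mul_le_mul_of_nonneg_left (Real.exp_le_exp.2 hcu) (Real.sqrt_nonneg _)
      _ = Real.sqrt (2*Real.exp (1+2*a^2)) * Real.exp (c + c^2/(4*δ)) * t ^ δ := by
          rw [Real.rpow_def_of_pos ht0, ← hu, mul_assoc, ← Real.exp_add]
          congr 2
          ring
  calc ‖f t‖ ≤ Real.sqrt K * (‖f 1‖ + ‖g 1‖) := hsumK
    _ ≤ Real.sqrt (2*Real.exp (1+2*a^2)) * Real.exp (c + c^2/(4*δ)) * t ^ δ * (‖f 1‖ + ‖g 1‖) := by
        apply mul_le_mul_of_nonneg_right hsqrtK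
        positivity
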